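/- arXiv:1404.4671 — 2 statements merged into one kernel-verified Lean document; each statement's English description precedes it below -/
import Mathlib

section
/- For any word Q in the simple reflections of a Coxeter group W and any w ∈ W, w ≤ Dem(Q) in Bruhat order if and only if Q contains a subword that is a reduced expression for w. -/
open List

variable {B : Type*} [DecidableEq B] {W : Type*} [Group W] {M : CoxeterMatrix B}

/-- One step of the Demazure product recursion: multiply by the simple reflection `s i`
if this increases length, otherwise do nothing. -/
noncomputable def demStep (cs : CoxeterSystem M W) (w : W) (i : B) : W :=
  if cs.length w < cs.length (w * cs.simple i) then w * cs.simple i else w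

/-- The Demazure product of a word `Q` in the simple reflections. -/
noncomputable def dem (cs : CoxeterSystem M W) (Q : List B) : W :=
  Q.foldl (demStep cs) 1

/-- `l` is a reduced word for `w`. -/
def IsRWordFor (cs : CoxeterSystem M W) (l : List B) (w : W) : Prop :=
  cs.wordProd l = w ∧ l.length = cs.length w

/-- Bruhat order via the subword property: `u ≤ v` iff some reduced word for `v`
contains a sublist which is a reduced word for `u`. -/
def BruhatLE (cs : CoxeterSystem M W) (u v : W) : Prop :=
  ∃ l : List B, IsRWordFor cs l v ∧ ∃ l' : List B, l'.Sublist l ∧ IsRWordFor cs l' u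

/-- The word obtained from `Q` by deleting the letters at positions in `F`
(the ordered complement `Q∖F`). -/
def cword (Q : List B) (F : Finset (Fin Q.length)) : List B :=
  ((List.finRange Q.length).filter (fun i => i ∉ F)).map Q.get

/-- `F` is a facet of the subword complex `Δ(Q,w)`: the ordered product of the letters of
`Q` at positions outside `F` is a reduced expression for `w`. -/
def IsFacet (cs : CoxeterSystem M W) (Q : List B) (w : W) (F : Finset (Fin Q.length)) : Prop :=
  IsRWordFor cs (cword Q F) w

/-- `J` is a face of the subword complex `Δ(Q,w)`: the complement `Q∖J` contains a reduced
expression for `w` as a subword. -/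
def IsFace (cs : CoxeterSystem M W) (Q : List B) (w : W) (J : Finset (Fin Q.length)) : Prop :=
  ∃ l : List B, l.Sublist (cword Q J) ∧ IsRWordFor cs l w


section Aux
set_option linter.unusedSectionVars false
open List CoxeterSystem
open scoped Classical

namespace DemAux

variable (cs : CoxeterSystem M W)

local prefix:100 "σ" => cs.simple
local prefix:100 "π" => cs.wordProd
local prefix:100 "ℓ" => cs.length

theorem rightInvSeq_cons (i : B) (ω : List B) :
    cs.rightInvSeq (i :: ω) = ((π ω)⁻¹ * σ i * π ω) :: cs.rightInvSeq ω := rfl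

theorem rightInvSeq_append (α β : List B) :
    cs.rightInvSeq (α ++ β) =
      (cs.rightInvSeq α).map (fun t => (π β)⁻¹ * t * (π β)) ++ cs.rightInvSeq β := by
  induction α with
  | nil => simp
  | cons i α ih =>
      rw [cons_append, rightInvSeq_cons, rightInvSeq_cons, ih, map_cons, cons_append]
      congr 1
      rw [cs.wordProd_append]
      group

/-- `signOfList L t` is `(-1)` to the number of occurrences of `t` in `L`. -/
noncomputable def signOfList : List W → W → ℤˣ
  | [], _ => 1
  | (x :: L), t => (if t = x then (-1 : ℤˣ) else 1) * signOfList L t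

@[simp] theorem signOfList_nil (t : W) : signOfList [] t = 1 := rfl

theorem signOfList_cons (x : W) (L : List W) (t : W) :
    signOfList (x :: L) t = (if t = x then (-1 : ℤˣ) else 1) * signOfList L t := rfl

theorem signOfList_append (L₁ L₂ : List W) (t : W) :
    signOfList (L₁ ++ L₂) t = signOfList L₁ t * signOfList L₂ t := by
  induction L₁ with
  | nil => simp
  | cons x L ih => rw [cons_append, signOfList_cons, signOfList_cons, ih, mul_assoc]

theorem signOfList_map_conj (L : List W) (c t : W) :
    signOfList (L.map (fun x => c⁻¹ * x * c)) t = signOfList L (c * t * c⁻¹) := by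
  induction L with
  | nil => simp
  | cons x L ih =>
      rw [map_cons, signOfList_cons, signOfList_cons, ih]
      congr 2
      simp only [eq_iff_iff]
      constructor
      · rintro rfl; group
      · rintro rfl; group

theorem signOfList_ne_one_mem {L : List W} {t : W} (h : signOfList L t ≠ 1) : t ∈ L := by
  induction L with
  | nil => simp at h
  | cons x L ih =>
      rw [signOfList_cons] at h
      by_cases hx : t = x
      · exact hx ▸ (mem_cons_self : x ∈ x :: L)
      · rw [if_neg hx, one_mul] at h
        exact mem_cons_of_mem x (ih h)

theorem signOfList_mul_self (L : List W) (t : W) :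
    signOfList L t * signOfList L t = 1 := by
  induction L with
  | nil => simp
  | cons x L ih =>
      rw [signOfList_cons]
      by_cases hx : t = x <;> simp [hx, mul_mul_mul_comm, ih]

end DemAux

namespace Chunk2
variable (cs : CoxeterSystem M W)
local prefix:100 "σ" => cs.simple
local prefix:100 "π" => cs.wordProd
local prefix:100 "ℓ" => cs.length
open DemAux

/-- The basic involution of `W × ℤˣ` used in the parity (reflection) representation. -/
noncomputable def flip (i : B) : W × ℤˣ → W × ℤˣ :=
  fun p => (σ i * p.1 * σ i, if p.1 = σ i then -p.2 else p.2)

theorem flip_involutive (i : B) : Function.Involutive (flip cs i) := by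
  intro p
  unfold flip
  have h1 : σ i * (σ i * p.1 * σ i) * σ i = p.1 := by
    rw [← mul_assoc, ← mul_assoc, cs.simple_mul_simple_self, one_mul, mul_assoc,
      cs.simple_mul_simple_self, mul_one]
  have h2 : (σ i * p.1 * σ i = σ i) ↔ (p.1 = σ i) := by
    constructor
    · intro h
      have hp : p.1 = (σ i)⁻¹ * (σ i * p.1 * σ i) * (σ i)⁻¹ := by group
      rw [h] at hp
      rw [hp, cs.inv_simple, cs.simple_mul_simple_self, one_mul]
    · intro h
      rw [h, mul_assoc, cs.simple_mul_simple_self, mul_one]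
  rcases p with ⟨t, ε⟩
  by_cases h : t = σ i
  · simp [h, h1, h2, cs.simple_mul_simple_self]
  · simp [h, h1, h2]

/-- The generator permutations of the parity representation. -/
noncomputable def sigmaPerm (i : B) : Equiv.Perm (W × ℤˣ) :=
  (flip_involutive cs i).toPerm

theorem sigmaPerm_apply (i : B) (p : W × ℤˣ) :
    sigmaPerm cs i p = (σ i * p.1 * σ i, if p.1 = σ i then -p.2 else p.2) := rfl

theorem prod_sigmaPerm_apply (ω : List B) (t : W) (ε : ℤˣ) :
    ((ω.map (sigmaPerm cs)).prod) (t, ε) =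
      (π ω * t * (π ω)⁻¹, signOfList (cs.rightInvSeq ω) t * ε) := by
  induction ω generalizing ε with
  | nil => simp
  | cons i ω ih =>
      rw [map_cons, prod_cons, Equiv.Perm.mul_apply, ih, sigmaPerm_apply]
      rw [rightInvSeq_cons, signOfList_cons]
      have hcond : (π ω * t * (π ω)⁻¹ = σ i) ↔ (t = (π ω)⁻¹ * σ i * π ω) := by
        constructor
        · intro h; rw [← h]; group
        · intro h; rw [h]; group
      rw [Prod.mk.injEq]
      constructor
      · show σ i * (π ω * t * (π ω)⁻¹) * σ i = π (i :: ω) * t * (π (i :: ω))⁻¹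
        rw [cs.wordProd_cons, mul_inv_rev, cs.inv_simple]
        group
      · show (if π ω * t * (π ω)⁻¹ = σ i then -(signOfList (cs.rightInvSeq ω) t * ε)
            else signOfList (cs.rightInvSeq ω) t * ε) = _
        by_cases h : t = (π ω)⁻¹ * σ i * π ω
        · rw [if_pos (hcond.mpr h), if_pos h, neg_mul, one_mul, neg_mul]
        · rw [if_neg (fun hc => h (hcond.mp hc)), if_neg h, one_mul]

end Chunk2

namespace Chunk3
variable (cs : CoxeterSystem M W)
local prefix:100 "σ" => cs.simple
local prefix:100 "π" => cs.wordProd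
open DemAux Chunk2

/-- The alternating word `[i, j, i, j, ...]` of length `m`. -/
def altL (i j : B) (m : ℕ) : List B :=
  (range m).map (fun k => if k % 2 = 0 then i else j)

theorem altL_succ (i j : B) (m : ℕ) :
    altL i j (m + 1) = altL i j m ++ [if m % 2 = 0 then i else j] := by
  unfold altL
  rw [range_succ, map_append, map_singleton]

theorem altL_even_succ (i j : B) (c : ℕ) :
    altL i j (2 * c + 1) = altL i j (2 * c) ++ [i] := by
  rw [altL_succ, Nat.mul_mod_right]
  simp

theorem altL_odd_succ (i j : B) (c : ℕ) :
    altL i j (2 * (c + 1)) = altL i j (2 * c + 1) ++ [j] := by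
  have := altL_succ i j (2 * c + 1)
  rw [show 2 * c + 1 + 1 = 2 * (c + 1) from by ring] at this
  rw [this]
  simp [Nat.mul_add_mod]

theorem prod_altL (i j : B) (c : ℕ) :
    π (altL i j (2 * c)) = (σ i * σ j) ^ c ∧
      π (altL i j (2 * c + 1)) = (σ i * σ j) ^ c * σ i := by
  induction c with
  | zero =>
      have h0 : altL i j 0 = [] := rfl
      have h1 : altL i j (2 * 0 + 1) = altL i j 0 ++ [i] := altL_even_succ i j 0
      refine ⟨by simp [h0], ?_⟩
      rw [h1, h0]
      simp
  | succ c ih =>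
      have hA : π (altL i j (2 * (c + 1))) = (σ i * σ j) ^ (c + 1) := by
        rw [altL_odd_succ, cs.wordProd_append, ih.2, cs.wordProd_singleton, pow_succ, mul_assoc]
      refine ⟨hA, ?_⟩
      rw [altL_even_succ, cs.wordProd_append, hA, cs.wordProd_singleton]

theorem prodPerm_altL (i j : B) (c : ℕ) :
    ((altL i j (2 * c)).map (sigmaPerm cs)).prod = (sigmaPerm cs i * sigmaPerm cs j) ^ c := by
  induction c with
  | zero => simp [altL]
  | succ c ih =>
      rw [altL_odd_succ, altL_even_succ, append_assoc, map_append, prod_append, ih, map_append,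
        map_singleton, map_singleton, prod_append, prod_singleton, prod_singleton, pow_succ]

theorem conj_simple_pow (i j : B) (c : ℕ) :
    σ i * (σ i * σ j) ^ c * σ i = ((σ i * σ j) ^ c)⁻¹ := by
  have h : σ i * (σ i * σ j) * (σ i)⁻¹ = (σ i * σ j)⁻¹ := by
    rw [cs.inv_simple, mul_inv_rev, cs.inv_simple, cs.inv_simple]
    calc σ i * (σ i * σ j) * σ i = (σ i * σ i) * (σ j * σ i) := by group
      _ = σ j * σ i := by rw [cs.simple_mul_simple_self, one_mul]
  calc σ i * (σ i * σ j) ^ c * σ i = σ i * (σ i * σ j) ^ c * (σ i)⁻¹ := by rw [cs.inv_simple]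
    _ = (σ i * (σ i * σ j) * (σ i)⁻¹) ^ c := by rw [conj_pow]
    _ = ((σ i * σ j)⁻¹) ^ c := by rw [h]
    _ = ((σ i * σ j) ^ c)⁻¹ := by rw [inv_pow]

theorem simple_mul_pow_inv (i j : B) (c : ℕ) :
    σ i * ((σ i * σ j) ^ c)⁻¹ = (σ i * σ j) ^ c * σ i := by
  have h := conj_simple_pow cs i j c
  calc σ i * ((σ i * σ j) ^ c)⁻¹ = σ i * (σ i * (σ i * σ j) ^ c * σ i) := by rw [h]
    _ = (σ i * σ i) * (σ i * σ j) ^ c * σ i := by group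
    _ = (σ i * σ j) ^ c * σ i := by rw [cs.simple_mul_simple_self, one_mul]

/-- Entries of the right inversion sequence of an alternating word of even length `2 * m`,
assuming `(σ i σ j) ^ m = 1`. -/
theorem ris_altL_getD (i j : B) (m : ℕ) (hm : (σ i * σ j) ^ m = 1) {k : ℕ} (hk : k < 2 * m) :
    (cs.rightInvSeq (altL i j (2 * m))).getD k 1 = (σ i * σ j) ^ k * σ i := by
  set p := σ i * σ j with hp
  have hlen : (altL i j (2 * m)).length = 2 * m := by simp [altL]
  have htake : ∀ n ≤ 2 * m, (altL i j (2 * m)).take n = altL i j n := by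
    intro n hn
    unfold altL
    rw [← map_take, take_range, min_eq_left hn]
  -- the product of the word is 1
  have htot : π (altL i j (2 * m)) = 1 := by rw [(prod_altL cs i j m).1, hm]
  -- product of the drop is inverse of product of the take
  have hdrop : π ((altL i j (2 * m)).drop (k + 1)) = (π (altL i j (k + 1)))⁻¹ := by
    have := cs.wordProd_append ((altL i j (2 * m)).take (k + 1)) ((altL i j (2 * m)).drop (k + 1))
    rw [take_append_drop, htot, htake (k + 1) (by omega)] at this
    exact eq_inv_of_mul_eq_one_right this.symm
  have hget : (altL i j (2 * m))[k]? = some (if k % 2 = 0 then i else j) := by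
    unfold altL
    rw [getElem?_map, getElem?_range (by omega)]
    rfl
  rw [cs.getD_rightInvSeq, hdrop, hget]
  simp only [Option.map_some, Option.getD_some, inv_inv]
  rcases Nat.even_or_odd k with ⟨c, hc⟩ | ⟨c, hc⟩
  · subst hc
    have hmod : (c + c) % 2 = 0 := by omega
    rw [if_pos hmod]
    have h1 : π (altL i j (c + c + 1)) = p ^ c * σ i := by
      rw [show c + c = 2 * c from by ring] at *
      exact (prod_altL cs i j c).2
    rw [h1]
    rw [mul_inv_rev, cs.inv_simple]
    calc p ^ c * σ i * σ i * (σ i * (p ^ c)⁻¹)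
        = p ^ c * (σ i * σ i) * (σ i * (p ^ c)⁻¹) := by group
      _ = p ^ c * (σ i * (p ^ c)⁻¹) := by rw [cs.simple_mul_simple_self, mul_one]
      _ = p ^ c * (p ^ c * σ i) := by rw [simple_mul_pow_inv]
      _ = p ^ (c + c) * σ i := by rw [pow_add]; group
  · subst hc
    have hmod : ¬((2 * c + 1) % 2 = 0) := by omega
    rw [if_neg hmod]
    have h1 : π (altL i j (2 * c + 1 + 1)) = p ^ (c + 1) := by
      rw [show 2 * c + 1 + 1 = 2 * (c + 1) from by ring]
      exact (prod_altL cs i j (c + 1)).1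
    have hsj : σ j = σ i * p := by
      rw [hp, ← mul_assoc, cs.simple_mul_simple_self, one_mul]
    rw [h1, hsj]
    calc p ^ (c + 1) * (σ i * p) * (p ^ (c + 1))⁻¹
        = p ^ (c + 1) * (σ i * ((p ^ c)⁻¹ * (p * p⁻¹))) := by
          rw [pow_succ]; group
      _ = p ^ (c + 1) * (σ i * (p ^ c)⁻¹) := by rw [mul_inv_cancel, mul_one]
      _ = p ^ (c + 1) * (p ^ c * σ i) := by rw [simple_mul_pow_inv]
      _ = p ^ (2 * c + 1) * σ i := by
          rw [show 2 * c + 1 = (c + 1) + c from by ring, pow_add]; group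

theorem ris_altL (i j : B) (m : ℕ) (hm : (σ i * σ j) ^ m = 1) :
    cs.rightInvSeq (altL i j (2 * m)) =
      (range (2 * m)).map (fun k => (σ i * σ j) ^ k * σ i) := by
  have hlen1 : (cs.rightInvSeq (altL i j (2 * m))).length = 2 * m := by
    rw [cs.length_rightInvSeq]; simp [altL]
  apply List.ext_getElem
  · rw [hlen1]; simp
  · intro k h1 h2
    rw [← getD_eq_getElem _ 1 h1, ris_altL_getD cs i j m hm (by omega : k < 2 * m)]
    rw [getElem_map, getElem_range]

theorem signOfList_ris_altL (i j : B) (m : ℕ) (hm : (σ i * σ j) ^ m = 1) (t : W) :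
    signOfList (cs.rightInvSeq (altL i j (2 * m))) t = 1 := by
  rw [ris_altL cs i j m hm]
  rw [two_mul, range_add, map_append, signOfList_append]
  have : (range m).map ((fun k => (σ i * σ j) ^ k * σ i) ∘ (m + ·)) =
      (range m).map (fun k => (σ i * σ j) ^ k * σ i) := by
    apply map_congr_left
    intro k _
    show (σ i * σ j) ^ (m + k) * σ i = (σ i * σ j) ^ k * σ i
    rw [pow_add, hm, one_mul]
  rw [map_map, this, signOfList_mul_self]

theorem sigmaPerm_liftable : M.IsLiftable (fun i => sigmaPerm cs i) := by
  intro i j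
  set m := M i j with hmdef
  have hm : (σ i * σ j) ^ m = 1 := cs.simple_mul_simple_pow i j
  show (sigmaPerm cs i * sigmaPerm cs j) ^ m = 1
  rw [← prodPerm_altL]
  apply Equiv.ext
  rintro ⟨t, ε⟩
  rw [prod_sigmaPerm_apply, (prod_altL cs i j m).1, hm, signOfList_ris_altL cs i j m hm]
  simp

end Chunk3

namespace Chunk4
variable (cs : CoxeterSystem M W)
local prefix:100 "σ" => cs.simple
local prefix:100 "π" => cs.wordProd
local prefix:100 "ℓ" => cs.length
open DemAux Chunk2 Chunk3

/-- The parity representation of `W` on `W × ℤˣ`. -/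
noncomputable def phi : W →* Equiv.Perm (W × ℤˣ) :=
  cs.lift ⟨fun i => sigmaPerm cs i, sigmaPerm_liftable cs⟩

theorem phi_simple (i : B) : phi cs (σ i) = sigmaPerm cs i := cs.lift_apply_simple _ i

theorem phi_wordProd (ω : List B) : phi cs (π ω) = (ω.map (sigmaPerm cs)).prod := by
  induction ω with
  | nil => simp [phi]
  | cons i ω ih => rw [cs.wordProd_cons, map_mul, phi_simple, map_cons, prod_cons, ih]

/-- The sign of `t` in the right inversion sequence only depends on the product of the word. -/
theorem sign_well_defined {ω ω' : List B} (h : π ω = π ω') (t : W) :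
    signOfList (cs.rightInvSeq ω) t = signOfList (cs.rightInvSeq ω') t := by
  have h1 := prod_sigmaPerm_apply cs ω t 1
  have h2 := prod_sigmaPerm_apply cs ω' t 1
  rw [← phi_wordProd, h, phi_wordProd] at h1
  have h3 := congrArg Prod.snd (h1.symm.trans h2)
  simpa using h3

theorem signOfList_eq_one_of_not_mem {L : List W} {t : W} (h : t ∉ L) : signOfList L t = 1 := by
  by_contra hne
  exact h (signOfList_ne_one_mem hne)

theorem signOfList_singleton (x t : W) : signOfList [x] t = if t = x then -1 else 1 := by
  rw [signOfList_cons, signOfList_nil, mul_one]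

theorem prod_palindrome (ν : List B) (i : B) :
    π (ν ++ [i] ++ ν.reverse) = π ν * σ i * (π ν)⁻¹ := by
  rw [cs.wordProd_append, cs.wordProd_append, cs.wordProd_reverse, cs.wordProd_singleton,
    mul_assoc]

theorem palindrome_inv (ν : List B) (i : B) :
    (π (ν ++ [i] ++ ν.reverse))⁻¹ = π (ν ++ [i] ++ ν.reverse) := by
  rw [prod_palindrome]
  rw [mul_inv_rev, mul_inv_rev, inv_inv, cs.inv_simple, mul_assoc]

theorem signOfList_ris_palindrome (ν : List B) (i : B) :
    signOfList (cs.rightInvSeq (ν ++ [i] ++ ν.reverse)) (π (ν ++ [i] ++ ν.reverse)) = -1 := by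
  induction ν with
  | nil =>
      have h1 : ([] : List B) ++ [i] ++ ([] : List B).reverse = [i] := by simp
      rw [h1, cs.wordProd_singleton, rightInvSeq_cons]
      simp [signOfList_cons]
  | cons j ν ih =>
      set ρ' := ν ++ [i] ++ ν.reverse with hρ'
      set t' := π ρ' with ht'
      have hword : (j :: ν) ++ [i] ++ (j :: ν).reverse = [j] ++ (ρ' ++ [j]) := by
        simp [hρ']
      have htinv : t'⁻¹ = t' := palindrome_inv cs ν i
      set t := σ j * t' * σ j with htdef
      have ht2 : π ([j] ++ (ρ' ++ [j])) = t := by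
        rw [cs.wordProd_append, cs.wordProd_append, cs.wordProd_singleton, ← ht', htdef,
          mul_assoc]
      have hX : π (ρ' ++ [j]) = t' * σ j := by
        rw [cs.wordProd_append, cs.wordProd_singleton, ← ht']
      have hXinv : (π (ρ' ++ [j]))⁻¹ = σ j * t' := by
        rw [hX, mul_inv_rev, cs.inv_simple, htinv]
      have hcond1 : (t = (π (ρ' ++ [j]))⁻¹ * σ j * π (ρ' ++ [j])) ↔ (t' = σ j) := by
        rw [hXinv, hX, htdef]
        constructor
        · intro h
          have h2 : (σ j * t' * σ j) * 1 = (σ j * t' * σ j) * (t' * σ j) := by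
            rw [mul_one]
            calc σ j * t' * σ j = σ j * t' * σ j * (t' * σ j) := h
              _ = (σ j * t' * σ j) * (t' * σ j) := rfl
          have h3 := (mul_left_cancel h2).symm
          have h4 : t' = (σ j)⁻¹ := eq_inv_of_mul_eq_one_left h3
          rwa [cs.inv_simple] at h4
        · intro h
          rw [h]
          simp [cs.simple_mul_simple_self]
      have hcond3 : (t = σ j) ↔ (t' = σ j) := by
        rw [htdef]
        constructor
        · intro h
          have h2 : σ j * (t' * σ j) = σ j * (1 : W) := by
            rw [mul_one, ← mul_assoc]
            exact h
          have h3 := mul_left_cancel h2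
          have h4 : t' = (σ j)⁻¹ := eq_inv_of_mul_eq_one_left h3
          rwa [cs.inv_simple] at h4
        · intro h
          rw [h]
          simp [cs.simple_mul_simple_self]
      have hpart2 : signOfList ((cs.rightInvSeq ρ').map
          (fun x => (π [j])⁻¹ * x * (π [j]))) t = -1 := by
        rw [signOfList_map_conj]
        have hc : π [j] * t * (π [j])⁻¹ = t' := by
          rw [cs.wordProd_singleton, cs.inv_simple, htdef, ← mul_assoc, ← mul_assoc,
            cs.simple_mul_simple_self, one_mul, mul_assoc, cs.simple_mul_simple_self, mul_one]
        rw [hc]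
        exact ih
      have hrisj : cs.rightInvSeq [j] = [σ j] := by
        rw [rightInvSeq_cons]
        simp
      rw [hword, ht2]
      rw [rightInvSeq_append cs [j] (ρ' ++ [j]), rightInvSeq_append cs ρ' [j]]
      rw [signOfList_append, signOfList_append, hpart2, hrisj, map_singleton,
        signOfList_singleton, signOfList_singleton]
      by_cases hts : t' = σ j
      · rw [if_pos (hcond1.mpr hts), if_pos (hcond3.mpr hts)]
        norm_num
      · rw [if_neg (fun hc => hts (hcond1.mp hc)), if_neg (fun hc => hts (hcond3.mp hc))]
        norm_num
end Chunk4

namespace Chunk5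
variable (cs : CoxeterSystem M W)
local prefix:100 "σ" => cs.simple
local prefix:100 "π" => cs.wordProd
local prefix:100 "ℓ" => cs.length
open DemAux Chunk2 Chunk3 Chunk4

/-- Strong exchange property: if right multiplication by a reflection decreases the length of
the product of a word, then the reflection appears in the right inversion sequence. -/
theorem strong_exchange_mem (ω : List B) {t : W} (ht : cs.IsReflection t)
    (h : ℓ (π ω * t) < ℓ (π ω)) : t ∈ cs.rightInvSeq ω := by
  obtain ⟨v, i, htvi⟩ := ht
  obtain ⟨ν, -, hν⟩ := cs.exists_reduced_word' v
  obtain ⟨ω', hred', hω'⟩ := cs.exists_reduced_word' (π ω * t)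
  set ρ := ν ++ [i] ++ ν.reverse with hρdef
  have hρ : π ρ = t := by
    rw [hρdef, prod_palindrome, ← hν, ← htvi]
  have htt : t * t = 1 := by
    rw [htvi]
    calc v * σ i * v⁻¹ * (v * σ i * v⁻¹) = v * (σ i * σ i) * v⁻¹ := by group
      _ = 1 := by rw [cs.simple_mul_simple_self, mul_one, mul_inv_cancel]
  have hkey : π (ω' ++ ρ) = π ω := by
    rw [cs.wordProd_append, hρ, ← hω', mul_assoc, htt, mul_one]
  have hnotmem : t ∉ cs.rightInvSeq ω' := by
    intro hmem
    have hinv := cs.isRightInversion_of_mem_rightInvSeq hred' hmem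
    rw [← hω'] at hinv
    have : ℓ (π ω * t * t) < ℓ (π ω * t) := hinv.2
    rw [mul_assoc, htt, mul_one] at this
    omega
  have hsign := sign_well_defined cs hkey t
  rw [rightInvSeq_append, signOfList_append, signOfList_map_conj, hρ] at hsign
  have hconj : t * t * t⁻¹ = t := by group
  rw [hconj, signOfList_eq_one_of_not_mem hnotmem, one_mul] at hsign
  have hpal : signOfList (cs.rightInvSeq ρ) t = -1 := by
    have := signOfList_ris_palindrome cs ν i
    rwa [← hρdef, hρ] at this
  rw [hpal] at hsign
  exact signOfList_ne_one_mem (by rw [← hsign]; decide)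

/-- Strong exchange property, erase-one-letter form. -/
theorem strong_exchange (ω : List B) {t : W} (ht : cs.IsReflection t)
    (h : ℓ (π ω * t) < ℓ (π ω)) :
    ∃ j < ω.length, π (ω.eraseIdx j) = π ω * t := by
  have hmem := strong_exchange_mem cs ω ht h
  rw [mem_iff_getElem] at hmem
  obtain ⟨j, hj, hgd⟩ := hmem
  rw [cs.length_rightInvSeq] at hj
  refine ⟨j, hj, ?_⟩
  rw [← cs.wordProd_mul_getD_rightInvSeq ω j]
  congr 1
  rw [getD_eq_getElem _ 1 (by rw [cs.length_rightInvSeq]; exact hj), hgd]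

/-- Deletion property: every word contains a reduced sublist with the same product. -/
theorem deletion (ω : List B) : ∃ ω', ω' <+ ω ∧ π ω' = π ω ∧ cs.IsReduced ω' := by
  obtain ⟨n, hn⟩ : ∃ n, ω.length ≤ n := ⟨ω.length, le_refl _⟩
  induction n generalizing ω with
  | zero =>
      have : ω = [] := eq_nil_of_length_eq_zero (by omega)
      exact ⟨ω, Sublist.refl ω, rfl, by simp [this, CoxeterSystem.IsReduced]⟩
  | succ n ihn =>
      by_cases hred : cs.IsReduced ω
      · exact ⟨ω, Sublist.refl ω, rfl, hred⟩
      -- find the first non-reduced prefix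
      have hωne : ω ≠ [] := by
        intro he
        exact hred (by simp [he, CoxeterSystem.IsReduced])
      have hex : ∃ m, ¬ cs.IsReduced (ω.take (m + 1)) := by
        refine ⟨ω.length - 1, ?_⟩
        have hlen : ω.length - 1 + 1 = ω.length := by
          have := length_pos_iff.mpr hωne
          omega
        rwa [hlen, take_length]
      set k := Nat.find hex with hkdef
      have hk1 : ¬ cs.IsReduced (ω.take (k + 1)) := Nat.find_spec hex
      have hk0 : cs.IsReduced (ω.take k) := by
        rcases Nat.eq_zero_or_pos k with h0 | hpos
        · rw [h0]
          simp [CoxeterSystem.IsReduced]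
        · have := Nat.find_min hex (m := k - 1) (by omega)
          rw [not_not] at this
          have hkk : k - 1 + 1 = k := by omega
          rwa [hkk] at this
      have hklen : k < ω.length := by
        by_contra hge
        push_neg at hge
        rw [take_of_length_le hge] at hk0
        exact hred hk0
      have htk : ω.take (k + 1) = ω.take k ++ [ω[k]] := by
        rw [take_succ, getElem?_eq_getElem hklen]
        rfl
      have hlk : (ω.take k).length = k := by
        rw [length_take]
        omega
      have hlenk : ℓ (π (ω.take k)) = k := by
        have h5 : ℓ (π (ω.take k)) = (ω.take k).length := hk0
        rw [h5, hlk]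
      have hdesc : ℓ (π (ω.take k) * σ ω[k]) < ℓ (π (ω.take k)) := by
        have hπ : π (ω.take (k + 1)) = π (ω.take k) * σ ω[k] := by
          rw [htk, cs.wordProd_append, cs.wordProd_singleton]
        rcases cs.length_mul_simple (π (ω.take k)) ω[k] with hup | hdown
        · exfalso
          apply hk1
          show ℓ (π (ω.take (k+1))) = (ω.take (k+1)).length
          rw [hπ, hup, hlenk, length_take]
          omega
        · omega
      obtain ⟨j, hj, hjprod⟩ := strong_exchange cs (ω.take k) (cs.isReflection_simple ω[k]) hdesc
      set ω₁ := (ω.take k).eraseIdx j ++ ω.drop (k + 1) with hω₁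
      have hsub1 : ω₁ <+ ω := by
        have h1 : (ω.take k).eraseIdx j <+ ω.take k := eraseIdx_sublist _ j
        have h2 : ω₁ <+ ω.take k ++ ω.drop (k + 1) := h1.append (Sublist.refl _)
        have h3 : ω.take k ++ ω.drop (k + 1) = ω.eraseIdx k :=
          (eraseIdx_eq_take_drop_succ ω k).symm
        rw [h3] at h2
        exact h2.trans (eraseIdx_sublist ω k)
      have hprod1 : π ω₁ = π ω := by
        rw [hω₁, cs.wordProd_append, hjprod]
        have : π (ω.take (k + 1)) = π (ω.take k) * σ ω[k] := by
          rw [htk, cs.wordProd_append, cs.wordProd_singleton]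
        rw [← this, ← cs.wordProd_append, take_append_drop]
      have hlen1 : ω₁.length ≤ n := by
        rw [hω₁, length_append]
        have h4 := length_eraseIdx_add_one (l := ω.take k) (i := j) (by omega)
        rw [length_drop]
        omega
      obtain ⟨ω', hs, hp, hr⟩ := ihn ω₁ hlen1
      exact ⟨ω', hs.trans hsub1, by rw [hp, hprod1], hr⟩

end Chunk5

namespace Chunk6
variable (cs : CoxeterSystem M W)
local prefix:100 "σ" => cs.simple
local prefix:100 "π" => cs.wordProd
local prefix:100 "ℓ" => cs.length
open DemAux Chunk2 Chunk3 Chunk4 Chunk5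

/-- One step in the Bruhat order: multiply on the right by a reflection, increasing length. -/
def bstep (u v : W) : Prop := ∃ t, cs.IsReflection t ∧ v = u * t ∧ ℓ u < ℓ v

/-- The Bruhat order, defined via chains of reflections. -/
def cle (u v : W) : Prop := Relation.ReflTransGen (bstep cs) u v

theorem cle_refl (u : W) : cle cs u u := Relation.ReflTransGen.refl

/-- Any reduced word for `v` contains a reduced word for anything below `v` in Bruhat order. -/
theorem cle_subword {u v : W} (h : cle cs u v) :
    ∀ m : List B, π m = v → cs.IsReduced m →
      ∃ m', m' <+ m ∧ π m' = u ∧ cs.IsReduced m' := by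
  induction h using Relation.ReflTransGen.head_induction_on with
  | refl => exact fun m hm hmred => ⟨m, Sublist.refl m, hm, hmred⟩
  | head hstep hchain ih =>
      rename_i u x
      intro m hm hmred
      obtain ⟨m₁, hsub₁, hprod₁, hred₁⟩ := ih m hm hmred
      obtain ⟨t, ht, hx, hlt⟩ := hstep
      have hxt : π m₁ * t = u := by
        rw [hprod₁, hx, mul_assoc, ht.mul_self, mul_one]
      have hdesc : ℓ (π m₁ * t) < ℓ (π m₁) := by
        rw [hxt, hprod₁]
        exact hlt
      obtain ⟨j, hj, hjp⟩ := strong_exchange cs m₁ ht hdesc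
      obtain ⟨m₂, hsub₂, hprod₂, hred₂⟩ := deletion cs (m₁.eraseIdx j)
      refine ⟨m₂, (hsub₂.trans (eraseIdx_sublist m₁ j)).trans hsub₁, ?_, hred₂⟩
      rw [hprod₂, hjp, hxt]

theorem concat_reduced_aux {m₁ : List B} {i : B} {u : W}
    (hprod : π (m₁ ++ [i]) = u) (hred : cs.IsReduced (m₁ ++ [i])) :
    π m₁ = u * σ i ∧ cs.IsReduced m₁ ∧ ℓ (u * σ i) + 1 = ℓ u := by
  have hp : π m₁ * σ i = u := by rw [← hprod, cs.wordProd_append, cs.wordProd_singleton]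
  have hp₁ : π m₁ = u * σ i := by
    rw [← hp, mul_assoc, cs.simple_mul_simple_self, mul_one]
  have hlen : m₁.length + 1 = ℓ u := by
    have h2 : (m₁ ++ [i]).length = ℓ u := by
      have h3 : ℓ (π (m₁ ++ [i])) = (m₁ ++ [i]).length := hred
      rw [hprod] at h3
      omega
    simpa using h2
  have hle : ℓ (u * σ i) ≤ m₁.length := by
    rw [← hp₁]
    exact cs.length_wordProd_le m₁
  rcases cs.length_mul_simple u i with hup | hdown
  · omega
  · have hlen₁ : ℓ (u * σ i) = m₁.length := by omega
    have : cs.IsReduced m₁ := by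
      show ℓ (π m₁) = m₁.length
      rw [hp₁, hlen₁]
    exact ⟨hp₁, this, by omega⟩

/-- The converse: appending an ascent. -/
theorem reduced_concat_of_ascent {m₁ : List B} {i : B} {u : W}
    (hprod : π m₁ = u) (hred : cs.IsReduced m₁) (hasc : ℓ u < ℓ (u * σ i)) :
    π (m₁ ++ [i]) = u * σ i ∧ cs.IsReduced (m₁ ++ [i]) := by
  have hp : π (m₁ ++ [i]) = u * σ i := by
    rw [cs.wordProd_append, cs.wordProd_singleton, hprod]
  refine ⟨hp, ?_⟩
  show ℓ (π (m₁ ++ [i])) = (m₁ ++ [i]).length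
  rw [hp]
  have h1 : m₁.length = ℓ u := by
    have h2 : ℓ (π m₁) = m₁.length := hred
    rw [hprod] at h2
    omega
  rcases cs.length_mul_simple u i with hup | hdown
  · rw [hup]
    simp [h1]
  · omega

/-- Splitting of a sublist of a word ending in a single letter. -/
theorem sublist_concat_cases {m' m₁ : List B} {i : B} (h : m' <+ m₁ ++ [i]) :
    m' <+ m₁ ∨ ∃ a, a <+ m₁ ∧ m' = a ++ [i] := by
  rw [sublist_append_iff] at h
  obtain ⟨a, b, rfl, ha, hb⟩ := h
  rcases sublist_singleton.mp hb with rfl | rfl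
  · left; simpa using ha
  · right; exact ⟨a, ha, rfl⟩

theorem RQP (n : ℕ) : ∀ v : W, ℓ v = n →
    (∀ m m' u, π m = v → cs.IsReduced m → m' <+ m → π m' = u → cs.IsReduced m' →
      cle cs u v) ∧
    (∀ u i, cle cs u v → ℓ u < ℓ (u * σ i) → ℓ (v * σ i) < ℓ v → cle cs (u * σ i) v) ∧
    (∀ u i, cle cs u v → ℓ u < ℓ (u * σ i) → ℓ v < ℓ (v * σ i) →
      cle cs (u * σ i) (v * σ i)) := by
  induction n using Nat.strong_induction_on with
  | _ n ih =>
  intro v hv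
  have hR : ∀ m m' u, π m = v → cs.IsReduced m → m' <+ m → π m' = u → cs.IsReduced m' →
      cle cs u v := by
    intro m m' u hm hmred hsub hm' hm'red
    rcases eq_nil_or_concat m with rfl | ⟨m₁, i, hcon⟩
    · have hm'nil : m' = [] := sublist_nil.mp hsub
      have hv1 : v = 1 := by rw [← hm, cs.wordProd_nil]
      have hu1 : u = 1 := by rw [← hm', hm'nil, cs.wordProd_nil]
      rw [hv1, hu1]
      exact cle_refl cs 1
    · rw [concat_eq_append] at hcon
      subst hcon
      obtain ⟨hprod₁, hred₁, hlen₁⟩ := concat_reduced_aux cs hm hmred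
      set v₁ := v * σ i with hv₁def
      have hv₁lt : ℓ v₁ < n := by omega
      have ihv₁ := ih (ℓ v₁) (by omega) v₁ rfl
      have hstep₁ : bstep cs v₁ v := by
        refine ⟨σ i, cs.isReflection_simple i, ?_, by omega⟩
        rw [hv₁def, mul_assoc, cs.simple_mul_simple_self, mul_one]
      rcases sublist_concat_cases hsub with hsubm₁ | ⟨a, ha, rfl⟩
      · have hcle₁ := ihv₁.1 m₁ m' u hprod₁ hred₁ hsubm₁ hm' hm'red
        exact hcle₁.tail hstep₁
      · obtain ⟨hproda, hreda, hlena⟩ := concat_reduced_aux cs hm' hm'red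
        have hcle₁ := ihv₁.1 m₁ a (u * σ i) hprod₁ hred₁ ha hproda hreda
        have hu₂ : u * σ i * σ i = u := by
          rw [mul_assoc, cs.simple_mul_simple_self, mul_one]
        have hv₂ : v₁ * σ i = v := by
          rw [hv₁def, mul_assoc, cs.simple_mul_simple_self, mul_one]
        have hP₁ := ihv₁.2.2 (u * σ i) i hcle₁ (by rw [hu₂]; omega) (by rw [hv₂]; omega)
        rwa [hu₂, hv₂] at hP₁
  have hQ : ∀ u i, cle cs u v → ℓ u < ℓ (u * σ i) → ℓ (v * σ i) < ℓ v →
      cle cs (u * σ i) v := by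
    intro u i hc hu hvd
    obtain ⟨m₀, hm₀red, hm₀⟩ := cs.exists_reduced_word' (v * σ i)
    have hm : π (m₀ ++ [i]) = v ∧ cs.IsReduced (m₀ ++ [i]) := by
      have h1 := reduced_concat_of_ascent cs hm₀.symm hm₀red
        (i := i) (by
          rw [mul_assoc, cs.simple_mul_simple_self, mul_one]
          exact hvd)
      rwa [mul_assoc, cs.simple_mul_simple_self, mul_one] at h1
    obtain ⟨m', hsub, hm', hm'red⟩ := cle_subword cs hc (m₀ ++ [i]) hm.1 hm.2
    rcases sublist_concat_cases hsub with hsubm₀ | ⟨a, ha, rfl⟩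
    · -- m' <+ m₀ : append the letter i
      obtain ⟨hp, hr⟩ := reduced_concat_of_ascent cs hm' hm'red hu
      exact hR (m₀ ++ [i]) (m' ++ [i]) (u * σ i) hm.1 hm.2
        (hsubm₀.append (Sublist.refl [i])) hp hr
    · -- m' ends in i: contradiction with the ascent of u
      obtain ⟨hpa, hra, hla⟩ := concat_reduced_aux cs hm' hm'red
      omega
  have hP : ∀ u i, cle cs u v → ℓ u < ℓ (u * σ i) → ℓ v < ℓ (v * σ i) →
      cle cs (u * σ i) (v * σ i) := by
    intro u i hc hu hva
    rcases Relation.ReflTransGen.cases_tail hc with heq | ⟨x, hux, hxv⟩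
    · rw [heq]
      exact cle_refl cs _
    · obtain ⟨t, ht, hvxt, hlt⟩ := hxv
      have ihx := ih (ℓ x) (by omega) x rfl
      by_cases hxs : ℓ x < ℓ (x * σ i)
      · have h1 := ihx.2.2 u i hux hu hxs
        have hstep : bstep cs (x * σ i) (v * σ i) := by
          refine ⟨σ i * t * σ i, ?_, ?_, ?_⟩
          · have := ht.conj (σ i)
            rwa [cs.inv_simple] at this
          · rw [hvxt]
            calc x * t * σ i = x * (σ i * σ i) * t * σ i := by
                  rw [cs.simple_mul_simple_self, mul_one]
              _ = x * σ i * (σ i * t * σ i) := by group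
          · rcases cs.length_mul_simple x i with h2 | h2
            · omega
            · omega
        exact h1.tail hstep
      · have hxd : ℓ (x * σ i) < ℓ x := by
          have := cs.length_mul_simple_ne x i
          omega
        have h1 := ihx.2.1 u i hux hu hxd
        have hstep2 : bstep cs v (v * σ i) := ⟨σ i, cs.isReflection_simple i, rfl, hva⟩
        exact (h1.tail ⟨t, ht, hvxt, hlt⟩).tail hstep2
  exact ⟨hR, hQ, hP⟩

end Chunk6

namespace Chunk7
variable (cs : CoxeterSystem M W)
local prefix:100 "σ" => cs.simple
local prefix:100 "π" => cs.wordProd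
local prefix:100 "ℓ" => cs.length
open DemAux Chunk2 Chunk3 Chunk4 Chunk5 Chunk6

theorem isRWordFor_iff {l : List B} {w : W} :
    IsRWordFor cs l w ↔ π l = w ∧ cs.IsReduced l := by
  constructor
  · rintro ⟨h1, h2⟩
    refine ⟨h1, ?_⟩
    show ℓ (π l) = l.length
    rw [h1, h2]
  · rintro ⟨h1, h2⟩
    refine ⟨h1, ?_⟩
    have h3 : ℓ (π l) = l.length := h2
    rw [h1] at h3
    omega

theorem bruhat_iff_cle {u v : W} : BruhatLE cs u v ↔ cle cs u v := by
  constructor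
  · rintro ⟨m, hm, m', hsub, hm'⟩
    rw [isRWordFor_iff] at hm hm'
    exact ((RQP cs (ℓ v) v rfl).1) m m' u hm.1 hm.2 hsub hm'.1 hm'.2
  · intro h
    obtain ⟨m, hmred, hm⟩ := cs.exists_reduced_word' v
    obtain ⟨m', hsub, hm', hm'red⟩ := cle_subword cs h m hm.symm hmred
    exact ⟨m, (isRWordFor_iff cs).mpr ⟨hm.symm, hmred⟩, m',
      hsub, (isRWordFor_iff cs).mpr ⟨hm', hm'red⟩⟩

/-- Subword property: if `u ≤ v`, then EVERY reduced word for `v` contains a reduced word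
for `u`. -/
theorem bruhat_forall {u v : W} (h : BruhatLE cs u v) :
    ∀ m, IsRWordFor cs m v → ∃ m', m' <+ m ∧ IsRWordFor cs m' u := by
  intro m hm
  rw [isRWordFor_iff] at hm
  obtain ⟨m', hsub, hm', hm'red⟩ :=
    cle_subword cs ((bruhat_iff_cle cs).mp h) m hm.1 hm.2
  exact ⟨m', hsub, (isRWordFor_iff cs).mpr ⟨hm', hm'red⟩⟩

/-- Lifting: ascents below, descents above. -/
theorem bruhat_lift {u v : W} {i : B} (h : BruhatLE cs u v)
    (hu : ℓ u < ℓ (u * σ i)) (hv : ℓ (v * σ i) < ℓ v) : BruhatLE cs (u * σ i) v := by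
  rw [bruhat_iff_cle] at h ⊢
  exact (RQP cs (ℓ v) v rfl).2.1 u i h hu hv

theorem bruhat_of_mul_ascent {u v : W} {i : B} (h : BruhatLE cs u (v * σ i))
    (hv : ℓ v < ℓ (v * σ i)) :
    BruhatLE cs u v ∨ (ℓ (u * σ i) < ℓ u ∧ BruhatLE cs (u * σ i) v) := by
  obtain ⟨m₀, hm₀red, hm₀⟩ := cs.exists_reduced_word' v
  obtain ⟨hp, hr⟩ := reduced_concat_of_ascent cs hm₀.symm hm₀red hv
  obtain ⟨m', hsub, hm'⟩ := bruhat_forall cs h (m₀ ++ [i]) ((isRWordFor_iff cs).mpr ⟨hp, hr⟩)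
  rw [isRWordFor_iff] at hm'
  rcases sublist_concat_cases hsub with hsubm₀ | ⟨a, ha, rfl⟩
  · left
    exact ⟨m₀, (isRWordFor_iff cs).mpr ⟨hm₀.symm, hm₀red⟩, m', hsubm₀,
      (isRWordFor_iff cs).mpr hm'⟩
  · right
    obtain ⟨hpa, hra, hla⟩ := concat_reduced_aux cs hm'.1 hm'.2
    exact ⟨by omega, ⟨m₀, (isRWordFor_iff cs).mpr ⟨hm₀.symm, hm₀red⟩, a, ha,
      (isRWordFor_iff cs).mpr ⟨hpa, hra⟩⟩⟩

theorem bruhatLE_demStep {u v : W} (i : B) (h : BruhatLE cs u v) :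
    BruhatLE cs u (demStep cs v i) := by
  rw [demStep]
  split_ifs with hasc
  · obtain ⟨m, hm, m', hsub, hm'⟩ := h
    rw [isRWordFor_iff] at hm
    obtain ⟨hp, hr⟩ := reduced_concat_of_ascent cs hm.1 hm.2 hasc
    exact ⟨m ++ [i], (isRWordFor_iff cs).mpr ⟨hp, hr⟩, m',
      hsub.trans (sublist_append_left m [i]), hm'⟩
  · exact h

theorem mul_bruhatLE_demStep {u v : W} (i : B) (h : BruhatLE cs u v)
    (hu : ℓ u < ℓ (u * σ i)) : BruhatLE cs (u * σ i) (demStep cs v i) := by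
  rw [demStep]
  split_ifs with hasc
  · obtain ⟨m, hm, m', hsub, hm'⟩ := h
    rw [isRWordFor_iff] at hm hm'
    obtain ⟨hp, hr⟩ := reduced_concat_of_ascent cs hm.1 hm.2 hasc
    obtain ⟨hp', hr'⟩ := reduced_concat_of_ascent cs hm'.1 hm'.2 hu
    exact ⟨m ++ [i], (isRWordFor_iff cs).mpr ⟨hp, hr⟩, m' ++ [i],
      hsub.append (Sublist.refl [i]), (isRWordFor_iff cs).mpr ⟨hp', hr'⟩⟩
  · have hvd : ℓ (v * σ i) < ℓ v := by
      have := cs.length_mul_simple_ne v i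
      omega
    exact bruhat_lift cs h hu hvd

theorem dem_nil : dem cs [] = 1 := rfl

theorem dem_concat (Q : List B) (i : B) :
    dem cs (Q ++ [i]) = demStep cs (dem cs Q) i := by
  rw [dem, foldl_append]
  rfl

end Chunk7

end Aux

open Chunk7 Chunk6 Chunk5 Chunk4 Chunk3 Chunk2 DemAux in
/-- `w ≤ Dem(Q)` in Bruhat order iff `Q` contains a subword that is a reduced expression
for `w`. -/
theorem bruhatLE_demazure_iff_subword (cs : CoxeterSystem M W) (Q : List B) (w : W) :
    BruhatLE cs w (dem cs Q) ↔ ∃ l : List B, l.Sublist Q ∧ IsRWordFor cs l w := by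
  induction Q using List.reverseRecOn generalizing w with
  | nil =>
      constructor
      · rintro ⟨m, ⟨hm, hml⟩, m', hsub, hm'⟩
        have hm0 : m = [] := by
          have hd : cs.length (dem cs []) = 0 := by
            rw [dem_nil, cs.length_one]
          rw [hd] at hml
          exact List.eq_nil_of_length_eq_zero hml
        subst hm0
        have hm'0 : m' = [] := List.sublist_nil.mp hsub
        exact ⟨[], List.Sublist.refl [], by rwa [hm'0] at hm'⟩
      · rintro ⟨l, hsub, hl⟩
        have hl0 : l = [] := List.sublist_nil.mp hsub
        subst hl0
        obtain ⟨hw, -⟩ := hl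
        rw [cs.wordProd_nil] at hw
        rw [← hw, dem_nil]
        exact ⟨[], ⟨cs.wordProd_nil, by simp⟩, [], List.Sublist.refl [],
          ⟨cs.wordProd_nil, by simp⟩⟩
  | append_singleton Q i IH =>
      rw [dem_concat]
      constructor
      · intro h
        by_cases hasc : cs.length (dem cs Q) < cs.length (dem cs Q * cs.simple i)
        · rw [demStep, if_pos hasc] at h
          rcases bruhat_of_mul_ascent cs h hasc with h1 | ⟨hdesc, h2⟩
          · obtain ⟨l, hsub, hl⟩ := (IH w).mp h1
            exact ⟨l, hsub.trans (List.sublist_append_left Q [i]), hl⟩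
          · obtain ⟨l, hsub, hl⟩ := (IH (w * cs.simple i)).mp h2
            rw [isRWordFor_iff] at hl
            have hasc' : cs.length (w * cs.simple i)
                < cs.length (w * cs.simple i * cs.simple i) := by
              rw [mul_assoc, cs.simple_mul_simple_self, mul_one]
              exact hdesc
            obtain ⟨hp, hr⟩ := reduced_concat_of_ascent cs hl.1 hl.2 hasc'
            rw [mul_assoc, cs.simple_mul_simple_self, mul_one] at hp
            exact ⟨l ++ [i], hsub.append (List.Sublist.refl [i]),
              (isRWordFor_iff cs).mpr ⟨hp, hr⟩⟩
        · rw [demStep, if_neg hasc] at h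
          obtain ⟨l, hsub, hl⟩ := (IH w).mp h
          exact ⟨l, hsub.trans (List.sublist_append_left Q [i]), hl⟩
      · rintro ⟨l, hsub, hl⟩
        rcases sublist_concat_cases hsub with h1 | ⟨a, ha, rfl⟩
        · exact bruhatLE_demStep cs i ((IH w).mpr ⟨l, h1, hl⟩)
        · rw [isRWordFor_iff] at hl
          obtain ⟨hpa, hra, hla⟩ := concat_reduced_aux cs hl.1 hl.2
          have h2 := (IH (w * cs.simple i)).mpr ⟨a, ha, (isRWordFor_iff cs).mpr ⟨hpa, hra⟩⟩
          have h3 := mul_bruhatLE_demStep cs i h2 (by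
            rw [mul_assoc, cs.simple_mul_simple_self, mul_one]
            omega)
          rwa [mul_assoc, cs.simple_mul_simple_self, mul_one] at h3
end

section
/- Let W be a finite Weyl group with word Q and w = Dem(Q). For two facets F and F' of the subword complex Δ(Q,w) that differ in exactly one position each (F∖{i} = F'∖{j} with i ≠ j), the brick vectors satisfy B(F) − B(F') ∈ ℝ·r(F,i), i.e., the difference of brick vectors of adjacent facets is a scalar multiple of the root r(F,i). -/
open List

variable {B : Type*} [DecidableEq B] {W : Type*} [Group W] {M : CoxeterMatrix B}

/-- The ordered product of the letters of `Q∖J` at positions `< k`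
(the prefix `(Q∖J)_(k-1)`). -/
def pcLt (cs : CoxeterSystem M W) (Q : List B) (J : Finset (Fin Q.length))
    (k : Fin Q.length) : W :=
  cs.wordProd (((List.finRange Q.length).filter (fun i => i < k ∧ i ∉ J)).map Q.get)


lemma mem_take_finRange {m nn : ℕ} {t : Fin m} (h : t ∈ (List.finRange m).take nn) : t.val < nn := by
  rw [List.mem_iff_getElem] at h
  obtain ⟨k, hk, hget⟩ := h
  have hk2 : k < nn ∧ k < m := by simp [List.length_take, lt_min_iff] at hk; exact hk
  have h1 : ((List.finRange m).take nn)[k] = (List.finRange m)[k]'(by simp; omega) := List.getElem_take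
  rw [h1] at hget
  have h2 : (List.finRange m)[k]'(by simp; omega) = ⟨k, by omega⟩ := by
    simp [List.getElem_finRange]
  rw [h2] at hget
  have := congrArg Fin.val hget; simp at this; omega

lemma mem_drop_finRange {m nn : ℕ} {t : Fin m} (h : t ∈ (List.finRange m).drop nn) : nn ≤ t.val := by
  rw [List.mem_iff_getElem] at h
  obtain ⟨k, hk, hget⟩ := h
  have hlen : nn + k < m := by simp [List.length_drop] at hk; omega
  have h1 : ((List.finRange m).drop nn)[k] = (List.finRange m)[nn + k]'(by simp; omega) := List.getElem_drop
  rw [h1] at hget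
  have h2 : (List.finRange m)[nn + k]'(by simp; omega) = ⟨nn + k, by omega⟩ := by
    simp [List.getElem_finRange]
  rw [h2] at hget
  have := congrArg Fin.val hget; simp at this; omega

lemma filter_finRange_split (m nn : ℕ) (p : Fin m → Bool) :
    (List.finRange m).filter p =
      ((List.finRange m).filter fun t => decide (t.val < nn) && p t) ++
      ((List.finRange m).filter fun t => decide (nn ≤ t.val) && p t) := by
  have hA : ((List.finRange m).filter fun t => decide (t.val < nn) && p t)
      = ((List.finRange m).take nn).filter p := by
    conv_lhs => rw [← List.take_append_drop nn (List.finRange m), List.filter_append]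
    have h1 : (((List.finRange m).drop nn).filter fun t => decide (t.val < nn) && p t) = [] := by
      rw [List.filter_eq_nil_iff]
      intro t ht
      have := mem_drop_finRange ht
      simp; omega
    have h2 : (((List.finRange m).take nn).filter fun t => decide (t.val < nn) && p t)
        = ((List.finRange m).take nn).filter p := by
      apply List.filter_congr
      intro t ht
      have := mem_take_finRange ht
      simp [this]
    rw [h1, h2, List.append_nil]
  have hB : ((List.finRange m).filter fun t => decide (nn ≤ t.val) && p t)
      = ((List.finRange m).drop nn).filter p := by
    conv_lhs => rw [← List.take_append_drop nn (List.finRange m), List.filter_append]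
    have h1 : (((List.finRange m).take nn).filter fun t => decide (nn ≤ t.val) && p t) = [] := by
      rw [List.filter_eq_nil_iff]
      intro t ht
      have := mem_take_finRange ht
      simp; omega
    have h2 : (((List.finRange m).drop nn).filter fun t => decide (nn ≤ t.val) && p t)
        = ((List.finRange m).drop nn).filter p := by
      apply List.filter_congr
      intro t ht
      have := mem_drop_finRange ht
      simp [this]
    rw [h1, h2, List.nil_append]
  rw [hA, hB]
  conv_lhs => rw [← List.take_append_drop nn (List.finRange m), List.filter_append]

lemma filter_finRange_eq_singleton {m : ℕ} (a : Fin m) :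
    ((List.finRange m).filter fun t => decide (t = a)) = [a] := by
  have h1 : ((List.finRange m).filter fun t => t == a) = List.replicate ((List.finRange m).count a) a :=
    List.filter_beq _
  have h2 : (List.finRange m).count a = 1 :=
    List.count_eq_one_of_mem (List.nodup_finRange m) (List.mem_finRange a)
  have h3 : ((List.finRange m).filter fun t => decide (t = a)) = ((List.finRange m).filter fun t => t == a) := by
    apply List.filter_congr; intro t _
    rfl
  rw [h3, h1, h2]; rfl

set_option linter.unusedSectionVars false

/-- prefix product up to (exclusive) position `nn : ℕ`. -/
def pc (cs : CoxeterSystem M W) (Q : List B) (J : Finset (Fin Q.length)) (nn : ℕ) : W :=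
  cs.wordProd (((List.finRange Q.length).filter (fun t => decide (t.val < nn ∧ t ∉ J))).map Q.get)

/-- the word of letters at positions in `[c, nn)` outside `J`. -/
def segWord (Q : List B) (J : Finset (Fin Q.length)) (c nn : ℕ) : List B :=
  ((List.finRange Q.length).filter
    (fun t => decide (c ≤ t.val ∧ t.val < nn ∧ t ∉ J))).map Q.get

/-- segment product for positions in `[c, nn)`. -/
def seg (cs : CoxeterSystem M W) (Q : List B) (J : Finset (Fin Q.length)) (c nn : ℕ) : W :=
  cs.wordProd (segWord Q J c nn)

lemma seg_eq_wordProd (cs : CoxeterSystem M W) (Q : List B) (J : Finset (Fin Q.length))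
    (c nn : ℕ) : seg cs Q J c nn = cs.wordProd (segWord Q J c nn) := rfl

lemma pcLt_eq_pc (cs : CoxeterSystem M W) (Q : List B) (J : Finset (Fin Q.length))
    (k : Fin Q.length) : pcLt cs Q J k = pc cs Q J k.val := by
  unfold pcLt pc
  congr 2

lemma pc_split (cs : CoxeterSystem M W) (Q : List B) (J : Finset (Fin Q.length))
    {c nn : ℕ} (h : c ≤ nn) : pc cs Q J nn = pc cs Q J c * seg cs Q J c nn := by
  unfold pc seg segWord
  rw [← CoxeterSystem.wordProd_append, ← List.map_append]
  congr 2
  rw [filter_finRange_split Q.length c (fun t => decide (t.val < nn ∧ t ∉ J))]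
  congr 1
  · apply List.filter_congr; intro t _
    simp only [← Bool.decide_and, decide_eq_decide]
    constructor
    · rintro ⟨h1, h2, h3⟩; exact ⟨h1, h3⟩
    · rintro ⟨h1, h3⟩; exact ⟨h1, by omega, h3⟩
  · apply List.filter_congr; intro t _
    simp only [← Bool.decide_and]

lemma pc_top (cs : CoxeterSystem M W) (Q : List B) (J : Finset (Fin Q.length))
    {nn : ℕ} (h : Q.length ≤ nn) : pc cs Q J nn = cs.wordProd (cword Q J) := by
  unfold pc cword
  congr 2
  apply List.filter_congr
  intro t _
  simp only [decide_eq_decide]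
  have : t.val < nn := lt_of_lt_of_le t.isLt h
  tauto

lemma pc_congr (cs : CoxeterSystem M W) (Q : List B) {J J' : Finset (Fin Q.length)} {nn : ℕ}
    (h : ∀ t : Fin Q.length, t.val < nn → (t ∈ J ↔ t ∈ J')) :
    pc cs Q J nn = pc cs Q J' nn := by
  unfold pc
  congr 2
  apply List.filter_congr
  intro t _
  simp only [decide_eq_decide]
  constructor
  · rintro ⟨h1, h2⟩; exact ⟨h1, fun hm => h2 ((h t h1).mpr hm)⟩
  · rintro ⟨h1, h2⟩; exact ⟨h1, fun hm => h2 ((h t h1).mp hm)⟩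

lemma seg_congr (cs : CoxeterSystem M W) (Q : List B) {J J' : Finset (Fin Q.length)} {c nn : ℕ}
    (h : ∀ t : Fin Q.length, c ≤ t.val → t.val < nn → (t ∈ J ↔ t ∈ J')) :
    seg cs Q J c nn = seg cs Q J' c nn := by
  unfold seg segWord
  congr 2
  apply List.filter_congr
  intro t _
  simp only [decide_eq_decide]
  constructor
  · rintro ⟨h1, h2, h3⟩; exact ⟨h1, h2, fun hm => h3 ((h t h1 h2).mpr hm)⟩
  · rintro ⟨h1, h2, h3⟩; exact ⟨h1, h2, fun hm => h3 ((h t h1 h2).mp hm)⟩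

lemma pc_step_mem (cs : CoxeterSystem M W) (Q : List B) (J : Finset (Fin Q.length))
    (k : Fin Q.length) (hk : k ∈ J) : pc cs Q J (k.val + 1) = pc cs Q J k.val := by
  unfold pc
  congr 2
  apply List.filter_congr
  intro t _
  simp only [decide_eq_decide]
  constructor
  · rintro ⟨h1, h2⟩
    refine ⟨?_, h2⟩
    rcases Nat.lt_succ_iff_lt_or_eq.mp h1 with h | h
    · exact h
    · exfalso; exact h2 (by rwa [show t = k from Fin.ext h])
  · rintro ⟨h1, h2⟩; exact ⟨by omega, h2⟩

lemma pc_step_not_mem (cs : CoxeterSystem M W) (Q : List B) (J : Finset (Fin Q.length))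
    (k : Fin Q.length) (hk : k ∉ J) :
    pc cs Q J (k.val + 1) = pc cs Q J k.val * cs.simple (Q.get k) := by
  rw [pc_split cs Q J (Nat.le_succ k.val)]
  congr 1
  unfold seg segWord
  have : ((List.finRange Q.length).filter
      (fun t => decide (k.val ≤ t.val ∧ t.val < k.val + 1 ∧ t ∉ J))) = [k] := by
    rw [← filter_finRange_eq_singleton k]
    apply List.filter_congr
    intro t _
    simp only [decide_eq_decide]
    constructor
    · rintro ⟨h1, h2, _⟩; exact Fin.ext (by omega)
    · rintro rfl; exact ⟨le_refl _, by omega, hk⟩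
  rw [this]
  simp [CoxeterSystem.wordProd_cons, CoxeterSystem.wordProd_nil]

section Vec
variable {n : ℕ} (cs : CoxeterSystem M W) (ρ : Representation ℝ W (Fin n → ℝ))
  (α ω : B → Fin n → ℝ) (A : B → B → ℝ)

lemma rep_mul_apply (g h : W) (v : Fin n → ℝ) : ρ (g * h) v = ρ g (ρ h v) := by
  rw [map_mul]; rfl

lemma span_invariant (hα : ∀ i j : B, ρ (cs.simple i) (α j) = α j - A i j • α i) (c : B)
    {v : Fin n → ℝ} (hv : v ∈ Submodule.span ℝ (Set.range α)) :
    ρ (cs.simple c) v ∈ Submodule.span ℝ (Set.range α) := by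
  induction hv using Submodule.span_induction with
  | mem x hx =>
      obtain ⟨b, rfl⟩ := hx
      rw [hα c b]
      exact sub_mem (Submodule.subset_span ⟨b, rfl⟩)
        (Submodule.smul_mem _ _ (Submodule.subset_span ⟨c, rfl⟩))
  | zero => simp
  | add x y _ _ hx hy => rw [map_add]; exact add_mem hx hy
  | smul a x _ hx => rw [map_smul]; exact Submodule.smul_mem _ _ hx

lemma wordProd_omega_sub_mem (hα : ∀ i j : B, ρ (cs.simple i) (α j) = α j - A i j • α i)
    (hω : ∀ i j : B, ρ (cs.simple i) (ω j) = ω j - (if j = i then (1:ℝ) else 0) • α i)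
    (l : List B) (b' : B) :
    ρ (cs.wordProd l) (ω b') - ω b' ∈ Submodule.span ℝ (Set.range α) := by
  induction l with
  | nil => simp [CoxeterSystem.wordProd_nil]
  | cons c l ih =>
      rw [CoxeterSystem.wordProd_cons, rep_mul_apply]
      have : ρ (cs.wordProd l) (ω b') = ω b' + (ρ (cs.wordProd l) (ω b') - ω b') := by ring_nf
      rw [this, map_add, hω c b']
      have h1 : ρ (cs.simple c) (ρ (cs.wordProd l) (ω b') - ω b') ∈ Submodule.span ℝ (Set.range α) :=
        span_invariant cs ρ α A hα c ih
      have h2 : (if b' = c then (1:ℝ) else 0) • α c ∈ Submodule.span ℝ (Set.range α) :=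
        Submodule.smul_mem _ _ (Submodule.subset_span ⟨c, rfl⟩)
      have : ω b' - (if b' = c then (1:ℝ) else 0) • α c
          + ρ (cs.simple c) (ρ (cs.wordProd l) (ω b') - ω b') - ω b'
          = ρ (cs.simple c) (ρ (cs.wordProd l) (ω b') - ω b')
            - (if b' = c then (1:ℝ) else 0) • α c := by ring_nf
      rw [this]
      exact sub_mem h1 h2

lemma simple_sub_smul (hα : ∀ i j : B, ρ (cs.simple i) (α j) = α j - A i j • α i) (c : B)
    {v : Fin n → ℝ} (hv : v ∈ Submodule.span ℝ (Set.range α)) :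
    ρ (cs.simple c) v - v ∈ Submodule.span ℝ {α c} := by
  induction hv using Submodule.span_induction with
  | mem x hx =>
      obtain ⟨b, rfl⟩ := hx
      rw [hα c b]
      have : α b - A c b • α c - α b = (-(A c b)) • α c := by
        module
      rw [this]
      exact Submodule.smul_mem _ _ (Submodule.mem_span_singleton_self _)
  | zero => simp
  | add x y _ _ hx hy =>
      rw [map_add]
      have : ρ (cs.simple c) x + ρ (cs.simple c) y - (x + y)
          = (ρ (cs.simple c) x - x) + (ρ (cs.simple c) y - y) := by ring_nf
      rw [this]; exact add_mem hx hy
  | smul a x _ hx =>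
      rw [map_smul]
      have : a • ρ (cs.simple c) x - a • x = a • (ρ (cs.simple c) x - x) := by
        rw [smul_sub]
      rw [this]; exact Submodule.smul_mem _ _ hx

/-- key vector lemma: applying `ρ(s_c) - 1` to `ρ(g)(ω b')`, for `g` a word product,
yields a multiple of `α c`. -/
lemma exists_smul_eq (hα : ∀ i j : B, ρ (cs.simple i) (α j) = α j - A i j • α i)
    (hω : ∀ i j : B, ρ (cs.simple i) (ω j) = ω j - (if j = i then (1:ℝ) else 0) • α i)
    (l : List B) (b' c : B) :
    ∃ μ : ℝ, ρ (cs.simple c) (ρ (cs.wordProd l) (ω b')) - ρ (cs.wordProd l) (ω b') = μ • α c := by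
  have hu := wordProd_omega_sub_mem cs ρ α ω A hα hω l b'
  set v := ρ (cs.wordProd l) (ω b') with hv
  have : ρ (cs.simple c) v - v
      = (ρ (cs.simple c) (ω b') - ω b') + (ρ (cs.simple c) (v - ω b') - (v - ω b')) := by
    rw [map_sub]; ring_nf
  rw [this, hω c b']
  have h1 : ρ (cs.simple c) (v - ω b') - (v - ω b') ∈ Submodule.span ℝ {α c} :=
    simple_sub_smul cs ρ α A hα c hu
  rw [Submodule.mem_span_singleton] at h1
  obtain ⟨μ, hμ⟩ := h1
  refine ⟨-(if b' = c then (1:ℝ) else 0) + μ, ?_⟩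
  rw [← hμ]
  module

end Vec

/-- The brick vector of a face `F`: `B(F) = Σ_k w(F,k)` where
`w(F,k) = (Q∖F)_(k-1)(ω_{q_k})` is the weight function. -/
noncomputable def brickVec (cs : CoxeterSystem M W) {n : ℕ}
    (ρ : Representation ℝ W (Fin n → ℝ)) (ω : B → Fin n → ℝ) (Q : List B)
    (F : Finset (Fin Q.length)) : Fin n → ℝ :=
  ∑ k : Fin Q.length, ρ (pcLt cs Q F k) (ω (Q.get k))

/-- For two facets `F`, `F'` of `Δ(Q,w)` related by a flip (`F∖{i} = F'∖{j}` with `i ≠ j`),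
the difference of brick vectors is a scalar multiple of the root `r(F,i)`. -/
theorem brick_vector_difference_parallel_root (cs : CoxeterSystem M W) (n : ℕ)
    (ρ : Representation ℝ W (Fin n → ℝ)) (α ω : B → Fin n → ℝ) (A : B → B → ℝ)
    (hA : ∀ i : B, A i i = 2)
    (hα : ∀ i j : B, ρ (cs.simple i) (α j) = α j - A i j • α i)
    (hω : ∀ i j : B, ρ (cs.simple i) (ω j) = ω j - (if j = i then (1 : ℝ) else 0) • α i)
    (Q : List B) (w : W) (hw : dem cs Q = w)
    (F F' : Finset (Fin Q.length)) (hF : IsFacet cs Q w F) (hF' : IsFacet cs Q w F')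
    (i j : Fin Q.length) (hi : i ∈ F) (hj : j ∈ F') (hij : i ≠ j)
    (hflip : F.erase i = F'.erase j) :
    ∃ c : ℝ, brickVec cs ρ ω Q F - brickVec cs ρ ω Q F' =
      c • ρ (pcLt cs Q F i) (α (Q.get i)) := by
  
  classical
  have hvij : (i : ℕ) ≠ (j : ℕ) := fun h => hij (Fin.ext h)
  have hjF : j ∉ F := by
    intro h
    have h1 : j ∈ F.erase i := Finset.mem_erase.mpr ⟨Ne.symm hij, h⟩
    rw [hflip] at h1
    exact (Finset.mem_erase.mp h1).1 rfl
  have hiF' : i ∉ F' := by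
    intro h
    have h1 : i ∈ F'.erase j := Finset.mem_erase.mpr ⟨hij, h⟩
    rw [← hflip] at h1
    exact (Finset.mem_erase.mp h1).1 rfl
  have hmem : ∀ t : Fin Q.length, t ≠ i → t ≠ j → (t ∈ F ↔ t ∈ F') := by
    intro t h1 h2
    constructor
    · intro h
      have : t ∈ F.erase i := Finset.mem_erase.mpr ⟨h1, h⟩
      rw [hflip] at this
      exact (Finset.mem_erase.mp this).2
    · intro h
      have : t ∈ F'.erase j := Finset.mem_erase.mpr ⟨h2, h⟩
      rw [← hflip] at this
      exact (Finset.mem_erase.mp this).2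
  have e1 : pc cs Q F Q.length = pc cs Q F' Q.length := by
    rw [pc_top cs Q F le_rfl, pc_top cs Q F' le_rfl, hF.1, hF'.1]
  have key : ∀ k : Fin Q.length, ∃ c : ℝ,
      ρ (pcLt cs Q F k) (ω (Q.get k)) - ρ (pcLt cs Q F' k) (ω (Q.get k))
        = c • ρ (pcLt cs Q F i) (α (Q.get i)) := by
    intro k
    rcases hvij.lt_or_gt with hlt | hlt
    · -- i < j
      rcases Nat.lt_or_ge (i : ℕ) (k : ℕ) with hik | hik
      · rcases Nat.lt_or_ge (j : ℕ) (k : ℕ) with hjk | hjk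
        · -- j < k : prefixes agree as group elements
          refine ⟨0, ?_⟩
          rw [pcLt_eq_pc, pcLt_eq_pc]
          have e2 : pc cs Q F Q.length = pc cs Q F k.val * seg cs Q F k.val Q.length :=
            pc_split cs Q F k.isLt.le
          have e3 : pc cs Q F' Q.length = pc cs Q F' k.val * seg cs Q F' k.val Q.length :=
            pc_split cs Q F' k.isLt.le
          have e4 : seg cs Q F k.val Q.length = seg cs Q F' k.val Q.length :=
            seg_congr cs Q (fun t ht1 _ => hmem t (Fin.ne_of_val_ne (by omega))
              (Fin.ne_of_val_ne (by omega)))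
          rw [e2, e3, e4] at e1
          rw [mul_right_cancel e1]
          simp
        · -- middle : i < k ≤ j
          rw [pcLt_eq_pc cs Q F k, pcLt_eq_pc cs Q F' k, pcLt_eq_pc cs Q F i]
          have hx : pc cs Q F' i.val = pc cs Q F i.val :=
            pc_congr cs Q (fun t ht => (hmem t (Fin.ne_of_val_ne (by omega))
              (Fin.ne_of_val_ne (by omega))).symm)
          have h1 : pc cs Q F k.val = pc cs Q F i.val * seg cs Q F (i.val+1) k.val := by
            rw [pc_split cs Q F (show i.val+1 ≤ k.val by omega), pc_step_mem cs Q F i hi]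
          have hseg : seg cs Q F' (i.val+1) k.val = seg cs Q F (i.val+1) k.val :=
            seg_congr cs Q (fun t ht1 ht2 => (hmem t (Fin.ne_of_val_ne (by omega))
              (Fin.ne_of_val_ne (by omega))).symm)
          have h2 : pc cs Q F' k.val
              = pc cs Q F i.val * (cs.simple (Q.get i) * seg cs Q F (i.val+1) k.val) := by
            rw [pc_split cs Q F' (show i.val+1 ≤ k.val by omega),
              pc_step_not_mem cs Q F' i hiF', hx, hseg, mul_assoc]
          obtain ⟨μ, hμ⟩ := exists_smul_eq cs ρ α ω A hα hω
            (segWord Q F (i.val+1) k.val) (Q.get k) (Q.get i)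
          refine ⟨-μ, ?_⟩
          rw [h1, h2, rep_mul_apply, rep_mul_apply, rep_mul_apply,
            seg_eq_wordProd cs Q F (i.val+1) k.val]
          have hs := eq_add_of_sub_eq hμ
          rw [hs, map_add, map_smul]
          module
      · -- k ≤ i : lists agree
        refine ⟨0, ?_⟩
        rw [pcLt_eq_pc, pcLt_eq_pc]
        rw [pc_congr cs Q (fun t ht => hmem t (Fin.ne_of_val_ne (by omega))
          (Fin.ne_of_val_ne (by omega)))]
        simp
    · -- j < i
      rcases Nat.lt_or_ge (j : ℕ) (k : ℕ) with hjk | hjk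
      · rcases Nat.lt_or_ge (i : ℕ) (k : ℕ) with hik | hik
        · -- i < k : prefixes agree
          refine ⟨0, ?_⟩
          rw [pcLt_eq_pc, pcLt_eq_pc]
          have e2 : pc cs Q F Q.length = pc cs Q F k.val * seg cs Q F k.val Q.length :=
            pc_split cs Q F k.isLt.le
          have e3 : pc cs Q F' Q.length = pc cs Q F' k.val * seg cs Q F' k.val Q.length :=
            pc_split cs Q F' k.isLt.le
          have e4 : seg cs Q F k.val Q.length = seg cs Q F' k.val Q.length :=
            seg_congr cs Q (fun t ht1 _ => hmem t (Fin.ne_of_val_ne (by omega))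
              (Fin.ne_of_val_ne (by omega)))
          rw [e2, e3, e4] at e1
          rw [mul_right_cancel e1]
          simp
        · -- middle : j < k ≤ i
          rw [pcLt_eq_pc cs Q F k, pcLt_eq_pc cs Q F' k, pcLt_eq_pc cs Q F i]
          have hx : pc cs Q F j.val = pc cs Q F' j.val :=
            pc_congr cs Q (fun t ht => hmem t (Fin.ne_of_val_ne (by omega))
              (Fin.ne_of_val_ne (by omega)))
          have hyk : pc cs Q F' k.val = pc cs Q F' j.val * seg cs Q F' (j.val+1) k.val := by
            rw [pc_split cs Q F' (show j.val+1 ≤ k.val by omega), pc_step_mem cs Q F' j hj]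
          have hseg : seg cs Q F (j.val+1) k.val = seg cs Q F' (j.val+1) k.val :=
            seg_congr cs Q (fun t ht1 ht2 => hmem t (Fin.ne_of_val_ne (by omega))
              (Fin.ne_of_val_ne (by omega)))
          have hFk : pc cs Q F k.val
              = pc cs Q F' j.val * (cs.simple (Q.get j) * seg cs Q F' (j.val+1) k.val) := by
            rw [pc_split cs Q F (show j.val+1 ≤ k.val by omega),
              pc_step_not_mem cs Q F j hjF, hx, hseg, mul_assoc]
          have hz : pc cs Q F' i.val = pc cs Q F' k.val * seg cs Q F' k.val i.val :=
            pc_split cs Q F' (by omega)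
          have erel : pc cs Q F (i.val+1) = pc cs Q F' (i.val+1) := by
            have e2 : pc cs Q F Q.length = pc cs Q F (i.val+1) * seg cs Q F (i.val+1) Q.length :=
              pc_split cs Q F (by omega)
            have e3 : pc cs Q F' Q.length
                = pc cs Q F' (i.val+1) * seg cs Q F' (i.val+1) Q.length :=
              pc_split cs Q F' (by omega)
            have e4 : seg cs Q F (i.val+1) Q.length = seg cs Q F' (i.val+1) Q.length :=
              seg_congr cs Q (fun t ht1 _ => hmem t (Fin.ne_of_val_ne (by omega))
                (Fin.ne_of_val_ne (by omega)))
            rw [e2, e3, e4] at e1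
            exact mul_right_cancel e1
          have hFi : pc cs Q F i.val = pc cs Q F' i.val * cs.simple (Q.get i) := by
            rw [← pc_step_mem cs Q F i hi, erel, pc_step_not_mem cs Q F' i hiF']
          have hseg2 : seg cs Q F k.val i.val = seg cs Q F' k.val i.val :=
            seg_congr cs Q (fun t ht1 ht2 => hmem t (Fin.ne_of_val_ne (by omega))
              (Fin.ne_of_val_ne (by omega)))
          have hFik : pc cs Q F i.val = pc cs Q F k.val * seg cs Q F' k.val i.val := by
            rw [pc_split cs Q F (show k.val ≤ i.val by omega), hseg2]
          set z := seg cs Q F' k.val i.val with hzdef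
          have hk1 : pc cs Q F' k.val = pc cs Q F' i.val * z⁻¹ := by rw [hz]; group
          have hk2 : pc cs Q F k.val
              = pc cs Q F' i.val * (cs.simple (Q.get i) * z⁻¹) := by
            have h5 : pc cs Q F k.val = pc cs Q F i.val * z⁻¹ := by rw [hFik]; group
            rw [h5, hFi]; group
          obtain ⟨μ, hμ⟩ := exists_smul_eq cs ρ α ω A hα hω
            ((segWord Q F' k.val i.val).reverse) (Q.get k) (Q.get i)
          have hrev : cs.wordProd ((segWord Q F' k.val i.val).reverse) = z⁻¹ := by
            rw [CoxeterSystem.wordProd_reverse, hzdef, seg_eq_wordProd]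
          rw [hrev] at hμ
          refine ⟨-μ, ?_⟩
          rw [hk1, hk2, hFi, rep_mul_apply, rep_mul_apply, rep_mul_apply, rep_mul_apply]
          have hs := eq_add_of_sub_eq hμ
          rw [hs, hα (Q.get i) (Q.get i), hA, map_add, map_smul, map_sub, map_smul]
          module
      · -- k ≤ j : lists agree
        refine ⟨0, ?_⟩
        rw [pcLt_eq_pc, pcLt_eq_pc]
        rw [pc_congr cs Q (fun t ht => hmem t (Fin.ne_of_val_ne (by omega))
          (Fin.ne_of_val_ne (by omega)))]
        simp
  choose f hf using key
  refine ⟨∑ k : Fin Q.length, f k, ?_⟩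
  unfold brickVec
  rw [← Finset.sum_sub_distrib, Finset.sum_smul]
  exact Finset.sum_congr rfl (fun k _ => hf k)
end
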